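/- arXiv:2003.09358 — 3 statements merged into one kernel-verified Lean document; each statement's English description precedes it below -/
import Mathlib

section
/- Let β ∈ (−1,1), β ≠ 0, α = √(1−β²), and let W_β(t,x) = 4·arctan(e^x) + 4·arctan(g(t,x)/h(t,x)) with g(t,x) = β(sinh(x) cos(αt) − sinh(βx)) and h(t,x) = cosh(x) cosh(βx) − β sinh(x) sinh(βx) − β cos(αt) (where h ≥ 1−|β| > 0), and let Q(x) = 4·arctan(e^x) be the static kink. Then for every fixed t ∈ ℝ, the function x ↦ W_β(t,x) − Q(x) is odd in x, and the function x ↦ ∂_t W_β(t,x) is odd in x. In other words, the wobbling kink is an (odd, odd) perturbation of the static kink (Q, 0). -/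
/-- Numerator in the wobbling kink formula. -/
noncomputable def wobG (β t x : ℝ) : ℝ :=
  β * (Real.sinh x * Real.cos (Real.sqrt (1 - β ^ 2) * t) - Real.sinh (β * x))

/-- Denominator in the wobbling kink formula. -/
noncomputable def wobH (β t x : ℝ) : ℝ :=
  Real.cosh x * Real.cosh (β * x) - β * Real.sinh x * Real.sinh (β * x)
    - β * Real.cos (Real.sqrt (1 - β ^ 2) * t)

/-- The sine-Gordon wobbling kink with parameter β. -/
noncomputable def wobblingKink (β t x : ℝ) : ℝ :=
  4 * Real.arctan (Real.exp x) + 4 * Real.arctan (wobG β t x / wobH β t x)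

/-- The static sine-Gordon kink. -/
noncomputable def staticKink (x : ℝ) : ℝ := 4 * Real.arctan (Real.exp x)

/-- For every fixed t, the wobbling kink is an (odd, odd) perturbation of
the static kink (Q, 0): both x ↦ W_β(t,x) − Q(x) and x ↦ ∂ₜW_β(t,x) are odd in x. -/
theorem wobblingKink_odd_perturbation
    (β : ℝ) (hβ : β ∈ Set.Ioo (-1 : ℝ) 1) (hβ0 : β ≠ 0) (t : ℝ) :
    (∀ x : ℝ,
      wobblingKink β t (-x) - staticKink (-x) = -(wobblingKink β t x - staticKink x))
    ∧ (∀ x : ℝ,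
      deriv (fun s => wobblingKink β s (-x)) t
        = -deriv (fun s => wobblingKink β s x) t) := by
  have hg : ∀ s x : ℝ, wobG β s (-x) = -wobG β s x := by
    intro s x
    simp [wobG, mul_neg, Real.sinh_neg]
    ring
  have hh : ∀ s x : ℝ, wobH β s (-x) = wobH β s x := by
    intro s x
    simp [wobH, mul_neg, Real.sinh_neg, Real.cosh_neg]
  have key : ∀ s x : ℝ, wobblingKink β s (-x)
      = 4 * Real.arctan (Real.exp (-x)) - 4 * Real.arctan (wobG β s x / wobH β s x) := by
    intro s x
    rw [wobblingKink, hg, hh, neg_div, Real.arctan_neg]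
    ring
  constructor
  · intro x
    rw [key, staticKink, staticKink, wobblingKink]
    ring
  · intro x
    have h1 : (fun s => wobblingKink β s (-x))
        = fun s => 4 * Real.arctan (Real.exp (-x)) + -(4 * Real.arctan (wobG β s x / wobH β s x)) := by
      funext s; rw [key]; ring
    have h2 : (fun s => wobblingKink β s x)
        = fun s => 4 * Real.arctan (Real.exp x) + 4 * Real.arctan (wobG β s x / wobH β s x) := by
      funext s; rw [wobblingKink]
    rw [h1, h2, deriv_const_add, deriv_const_add, deriv.fun_neg]
end

section
/- Let φ, ψ : ℝ × ℝ → ℝ be C² functions of (t,x) satisfying, for all (t,x), the linearized Bäcklund system around the sine-Gordon kink: ∂_x φ − ∂_t ψ = −tanh(x)·φ and ∂_t φ − ∂_x ψ = −tanh(x)·ψ. Then φ satisfies the linearized sine-Gordon equation around the kink, ∂_t² φ − ∂_x² φ + (1 − 2 sech²(x))·φ = 0, and ψ satisfies the linear Klein-Gordon equation ∂_t² ψ − ∂_x² ψ + ψ = 0. -/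
open Real

private lemma hasDerivAt_tanh' (x : ℝ) :
    HasDerivAt Real.tanh ((1 / Real.cosh x) ^ 2) x := by
  have h : HasDerivAt (fun y => Real.sinh y / Real.cosh y)
      ((Real.cosh x * Real.cosh x - Real.sinh x * Real.sinh x) / Real.cosh x ^ 2) x :=
    (Real.hasDerivAt_sinh x).div (Real.hasDerivAt_cosh x) (Real.cosh_pos x).ne'
  have hfun : Real.tanh = fun y => Real.sinh y / Real.cosh y :=
    funext fun y => Real.tanh_eq_sinh_div_cosh y
  rw [hfun]
  convert h using 1
  have h2 : Real.cosh x ^ 2 - Real.sinh x ^ 2 = 1 := Real.cosh_sq_sub_sinh_sq x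
  field_simp
  nlinarith [h2]

private lemma tanh_sq_add (x : ℝ) :
    Real.tanh x ^ 2 + (1 / Real.cosh x) ^ 2 = 1 := by
  have h2 : Real.cosh x ^ 2 - Real.sinh x ^ 2 = 1 := Real.cosh_sq_sub_sinh_sq x
  have hc := (Real.cosh_pos x).ne'
  rw [Real.tanh_eq_sinh_div_cosh]
  field_simp
  linarith

section helpers

variable (F : ℝ × ℝ → ℝ)

private lemma lineT (hF : Differentiable ℝ F) (t x : ℝ) :
    HasDerivAt (fun t' => F (t', x)) (fderiv ℝ F (t, x) (1, 0)) t := by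
  have hγ : HasDerivAt (fun t' : ℝ => ((t', x) : ℝ × ℝ)) ((1 : ℝ), (0 : ℝ)) t :=
    (hasDerivAt_id t).prodMk (hasDerivAt_const t x)
  exact (hF (t, x)).hasFDerivAt.comp_hasDerivAt t hγ

private lemma lineX (hF : Differentiable ℝ F) (t x : ℝ) :
    HasDerivAt (fun x' => F (t, x')) (fderiv ℝ F (t, x) (0, 1)) x := by
  have hγ : HasDerivAt (fun x' : ℝ => ((t, x') : ℝ × ℝ)) ((0 : ℝ), (1 : ℝ)) x :=
    (hasDerivAt_const x t).prodMk (hasDerivAt_id x)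
  exact (hF (t, x)).hasFDerivAt.comp_hasDerivAt x hγ

private lemma lineT' (hF : ContDiff ℝ 2 F) (t x : ℝ) (w : ℝ × ℝ) :
    HasDerivAt (fun t' => fderiv ℝ F (t', x) w)
      (fderiv ℝ (fderiv ℝ F) (t, x) (1, 0) w) t := by
  have hF' : Differentiable ℝ (fderiv ℝ F) :=
    (hF.fderiv_right (m := 1) (by norm_num)).differentiable (by norm_num)
  have hγ : HasDerivAt (fun t' : ℝ => ((t', x) : ℝ × ℝ)) ((1 : ℝ), (0 : ℝ)) t :=
    (hasDerivAt_id t).prodMk (hasDerivAt_const t x)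
  have h := ((ContinuousLinearMap.apply ℝ ℝ w).hasFDerivAt.comp (t, x)
    (hF' (t, x)).hasFDerivAt).comp_hasDerivAt t hγ
  exact h

private lemma lineX' (hF : ContDiff ℝ 2 F) (t x : ℝ) (w : ℝ × ℝ) :
    HasDerivAt (fun x' => fderiv ℝ F (t, x') w)
      (fderiv ℝ (fderiv ℝ F) (t, x) (0, 1) w) x := by
  have hF' : Differentiable ℝ (fderiv ℝ F) :=
    (hF.fderiv_right (m := 1) (by norm_num)).differentiable (by norm_num)
  have hγ : HasDerivAt (fun x' : ℝ => ((t, x') : ℝ × ℝ)) ((0 : ℝ), (1 : ℝ)) x :=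
    (hasDerivAt_const x t).prodMk (hasDerivAt_id x)
  have h := ((ContinuousLinearMap.apply ℝ ℝ w).hasFDerivAt.comp (t, x)
    (hF' (t, x)).hasFDerivAt).comp_hasDerivAt x hγ
  exact h

end helpers

/-- Solutions of the linearized Bäcklund system around the sine-Gordon kink
satisfy the linearized sine-Gordon equation around the kink, and the linear Klein-Gordon
equation, respectively. -/
theorem linearized_backlund_SG
    (φ ψ : ℝ → ℝ → ℝ)
    (hφ : ContDiff ℝ 2 (fun p : ℝ × ℝ => φ p.1 p.2))
    (hψ : ContDiff ℝ 2 (fun p : ℝ × ℝ => ψ p.1 p.2))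
    (h1 : ∀ t x : ℝ,
      deriv (fun x' => φ t x') x - deriv (fun t' => ψ t' x) t
        = -Real.tanh x * φ t x)
    (h2 : ∀ t x : ℝ,
      deriv (fun t' => φ t' x) t - deriv (fun x' => ψ t x') x
        = -Real.tanh x * ψ t x) :
    (∀ t x : ℝ,
      deriv (fun t' => deriv (fun t'' => φ t'' x) t') t
        - deriv (fun x' => deriv (fun x'' => φ t x'') x') x
        + (1 - 2 * (1 / Real.cosh x) ^ 2) * φ t x = 0)
    ∧ (∀ t x : ℝ,
      deriv (fun t' => deriv (fun t'' => ψ t'' x) t') t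
        - deriv (fun x' => deriv (fun x'' => ψ t x'') x') x
        + ψ t x = 0) := by
  set Fφ : ℝ × ℝ → ℝ := fun p => φ p.1 p.2 with hFφ
  set Fψ : ℝ × ℝ → ℝ := fun p => ψ p.1 p.2 with hFψ
  have hφd : Differentiable ℝ Fφ := hφ.differentiable (by norm_num)
  have hψd : Differentiable ℝ Fψ := hψ.differentiable (by norm_num)
  -- first derivatives as deriv values
  have dφt : ∀ t x : ℝ, deriv (fun t' => φ t' x) t = fderiv ℝ Fφ (t, x) (1, 0) :=
    fun t x => (lineT Fφ hφd t x).deriv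
  have dφx : ∀ t x : ℝ, deriv (fun x' => φ t x') x = fderiv ℝ Fφ (t, x) (0, 1) :=
    fun t x => (lineX Fφ hφd t x).deriv
  have dψt : ∀ t x : ℝ, deriv (fun t' => ψ t' x) t = fderiv ℝ Fψ (t, x) (1, 0) :=
    fun t x => (lineT Fψ hψd t x).deriv
  have dψx : ∀ t x : ℝ, deriv (fun x' => ψ t x') x = fderiv ℝ Fψ (t, x) (0, 1) :=
    fun t x => (lineX Fψ hψd t x).deriv
  -- restated Bäcklund relations
  have H1 : ∀ t x : ℝ, fderiv ℝ Fφ (t, x) (0, 1) - fderiv ℝ Fψ (t, x) (1, 0)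
      = -Real.tanh x * φ t x := by
    intro t x; rw [← dφx, ← dψt]; exact h1 t x
  have H2 : ∀ t x : ℝ, fderiv ℝ Fφ (t, x) (1, 0) - fderiv ℝ Fψ (t, x) (0, 1)
      = -Real.tanh x * ψ t x := by
    intro t x; rw [← dφt, ← dψx]; exact h2 t x
  constructor
  · intro t x
    set Aφ := fderiv ℝ (fderiv ℝ Fφ) (t, x)
    set Bψ := fderiv ℝ (fderiv ℝ Fψ) (t, x)
    -- differentiate H1 in x
    have hL3 : HasDerivAt (fun x' => fderiv ℝ Fφ (t, x') (0, 1)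
        - fderiv ℝ Fψ (t, x') (1, 0)) (Aφ (0, 1) (0, 1) - Bψ (0, 1) (1, 0)) x :=
      (lineX' Fφ hφ t x (0, 1)).sub (lineX' Fψ hψ t x (1, 0))
    have hR3 : HasDerivAt (fun x' => -Real.tanh x' * φ t x')
        (-((1 / Real.cosh x) ^ 2) * φ t x
          + -Real.tanh x * fderiv ℝ Fφ (t, x) (0, 1)) x :=
      ((hasDerivAt_tanh' x).neg).mul (lineX Fφ hφd t x)
    have e3 : Aφ (0, 1) (0, 1) - Bψ (0, 1) (1, 0)
        = -((1 / Real.cosh x) ^ 2) * φ t x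
          + -Real.tanh x * fderiv ℝ Fφ (t, x) (0, 1) := by
      refine HasDerivAt.unique ?_ hR3
      exact hL3.congr_of_eventuallyEq
        (Filter.Eventually.of_forall fun x' => (H1 t x').symm) |>.congr_deriv rfl
    -- differentiate H2 in t
    have hL4 : HasDerivAt (fun t' => fderiv ℝ Fφ (t', x) (1, 0)
        - fderiv ℝ Fψ (t', x) (0, 1)) (Aφ (1, 0) (1, 0) - Bψ (1, 0) (0, 1)) t :=
      (lineT' Fφ hφ t x (1, 0)).sub (lineT' Fψ hψ t x (0, 1))
    have hR4 : HasDerivAt (fun t' => -Real.tanh x * ψ t' x)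
        (-Real.tanh x * fderiv ℝ Fψ (t, x) (1, 0)) t :=
      (lineT Fψ hψd t x).const_mul _
    have e4 : Aφ (1, 0) (1, 0) - Bψ (1, 0) (0, 1)
        = -Real.tanh x * fderiv ℝ Fψ (t, x) (1, 0) := by
      refine HasDerivAt.unique ?_ hR4
      exact hL4.congr_of_eventuallyEq
        (Filter.Eventually.of_forall fun t' => (H2 t' x).symm)
    have hsym : Bψ (1, 0) (0, 1) = Bψ (0, 1) (1, 0) :=
      (hψ.contDiffAt.isSymmSndFDerivAt (by norm_num)) _ _
    have gtt : deriv (fun t' => deriv (fun t'' => φ t'' x) t') t = Aφ (1, 0) (1, 0) := by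
      have hfun : (fun t' => deriv (fun t'' => φ t'' x) t')
          = fun t' => fderiv ℝ Fφ (t', x) (1, 0) :=
        funext fun t' => (lineT Fφ hφd t' x).deriv
      rw [hfun]; exact (lineT' Fφ hφ t x (1, 0)).deriv
    have gxx : deriv (fun x' => deriv (fun x'' => φ t x'') x') x = Aφ (0, 1) (0, 1) := by
      have hfun : (fun x' => deriv (fun x'' => φ t x'') x')
          = fun x' => fderiv ℝ Fφ (t, x') (0, 1) :=
        funext fun x' => (lineX Fφ hφd t x').deriv
      rw [hfun]; exact (lineX' Fφ hφ t x (0, 1)).deriv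
    rw [gtt, gxx]
    have htsq := tanh_sq_add x
    have hb := H1 t x
    linear_combination e4 - e3 + hsym + Real.tanh x * hb - φ t x * htsq
  · intro t x
    set Aφ := fderiv ℝ (fderiv ℝ Fφ) (t, x)
    set Bψ := fderiv ℝ (fderiv ℝ Fψ) (t, x)
    -- differentiate H1 in t
    have hL1 : HasDerivAt (fun t' => fderiv ℝ Fφ (t', x) (0, 1)
        - fderiv ℝ Fψ (t', x) (1, 0)) (Aφ (1, 0) (0, 1) - Bψ (1, 0) (1, 0)) t :=
      (lineT' Fφ hφ t x (0, 1)).sub (lineT' Fψ hψ t x (1, 0))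
    have hR1 : HasDerivAt (fun t' => -Real.tanh x * φ t' x)
        (-Real.tanh x * fderiv ℝ Fφ (t, x) (1, 0)) t :=
      (lineT Fφ hφd t x).const_mul _
    have e1 : Aφ (1, 0) (0, 1) - Bψ (1, 0) (1, 0)
        = -Real.tanh x * fderiv ℝ Fφ (t, x) (1, 0) := by
      refine HasDerivAt.unique ?_ hR1
      exact hL1.congr_of_eventuallyEq
        (Filter.Eventually.of_forall fun t' => (H1 t' x).symm)
    -- differentiate H2 in x
    have hL2 : HasDerivAt (fun x' => fderiv ℝ Fφ (t, x') (1, 0)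
        - fderiv ℝ Fψ (t, x') (0, 1)) (Aφ (0, 1) (1, 0) - Bψ (0, 1) (0, 1)) x :=
      (lineX' Fφ hφ t x (1, 0)).sub (lineX' Fψ hψ t x (0, 1))
    have hR2 : HasDerivAt (fun x' => -Real.tanh x' * ψ t x')
        (-((1 / Real.cosh x) ^ 2) * ψ t x
          + -Real.tanh x * fderiv ℝ Fψ (t, x) (0, 1)) x :=
      ((hasDerivAt_tanh' x).neg).mul (lineX Fψ hψd t x)
    have e2 : Aφ (0, 1) (1, 0) - Bψ (0, 1) (0, 1)
        = -((1 / Real.cosh x) ^ 2) * ψ t x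
          + -Real.tanh x * fderiv ℝ Fψ (t, x) (0, 1) := by
      refine HasDerivAt.unique ?_ hR2
      exact hL2.congr_of_eventuallyEq
        (Filter.Eventually.of_forall fun x' => (H2 t x').symm)
    have hsymφ : Aφ (1, 0) (0, 1) = Aφ (0, 1) (1, 0) :=
      (hφ.contDiffAt.isSymmSndFDerivAt (by norm_num)) _ _
    have gtt : deriv (fun t' => deriv (fun t'' => ψ t'' x) t') t = Bψ (1, 0) (1, 0) := by
      have hfun : (fun t' => deriv (fun t'' => ψ t'' x) t')
          = fun t' => fderiv ℝ Fψ (t', x) (1, 0) :=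
        funext fun t' => (lineT Fψ hψd t' x).deriv
      rw [hfun]; exact (lineT' Fψ hψ t x (1, 0)).deriv
    have gxx : deriv (fun x' => deriv (fun x'' => ψ t x'') x') x = Bψ (0, 1) (0, 1) := by
      have hfun : (fun x' => deriv (fun x'' => ψ t x'') x')
          = fun x' => fderiv ℝ Fψ (t, x') (0, 1) :=
        funext fun x' => (lineX Fψ hψd t x').deriv
      rw [hfun]; exact (lineX' Fψ hψ t x (0, 1)).deriv
    rw [gtt, gxx]
    have htsq := tanh_sq_add x
    have hb := H2 t x
    linear_combination -e1 + e2 + hsymφ + Real.tanh x * hb - ψ t x * htsq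
end

section
/- Let 𝓛_H = −∂_x² + 2 − 3 sech²(x/√2) be the linearized φ⁴ operator around the kink H(x) = tanh(x/√2). Then the even bounded function R(x) = 1 − (3/2)·sech²(x/√2) is a resonance of 𝓛_H at λ = 2, the bottom of the continuous spectrum: for all x ∈ ℝ, −R''(x) + (2 − 3 sech²(x/√2))·R(x) = 2·R(x). -/
/-- The even resonance profile of the linearized φ⁴ operator. -/
noncomputable def phi4Res (x : ℝ) : ℝ :=
  1 - (3 / 2) * (1 / Real.cosh (x / Real.sqrt 2)) ^ 2

/-- First derivative of `phi4Res`. -/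
noncomputable def phi4Res' (x : ℝ) : ℝ :=
  3 / Real.sqrt 2 * (Real.sinh (x / Real.sqrt 2) / (Real.cosh (x / Real.sqrt 2)) ^ 3)

lemma cosh_ne' (u : ℝ) : Real.cosh u ≠ 0 := (Real.cosh_pos u).ne'

lemma hasDerivAt_phi4Res (x : ℝ) : HasDerivAt phi4Res (phi4Res' x) x := by
  have h1 : HasDerivAt (fun y : ℝ => y / Real.sqrt 2) (1 / Real.sqrt 2) x := by
    simpa using (hasDerivAt_id x).div_const (Real.sqrt 2)
  have hc : HasDerivAt (fun y : ℝ => Real.cosh (y / Real.sqrt 2))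
      (Real.sinh (x / Real.sqrt 2) * (1 / Real.sqrt 2)) x :=
    (Real.hasDerivAt_cosh _).comp x h1
  have hinv := hc.inv (cosh_ne' _)
  simp only [← one_div] at hinv
  have hsq := hinv.pow 2
  have hR := (hasDerivAt_const x (1 : ℝ)).sub (hsq.const_mul (3 / 2))
  refine hR.congr_deriv ?_
  have hcne := cosh_ne' (x / Real.sqrt 2)
  have hs0 : Real.sqrt 2 ≠ 0 := by positivity
  simp only [Pi.div_apply, Pi.one_apply, phi4Res']
  field_simp [phi4Res']
  norm_num
  field_simp

lemma hasDerivAt_phi4Res' (x : ℝ) : HasDerivAt phi4Res'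
    (3 / 2 * (1 / Real.cosh (x / Real.sqrt 2)) ^ 2
      - 9 / 2 * Real.sinh (x / Real.sqrt 2) ^ 2 * (1 / Real.cosh (x / Real.sqrt 2)) ^ 4) x := by
  have h1 : HasDerivAt (fun y : ℝ => y / Real.sqrt 2) (1 / Real.sqrt 2) x := by
    simpa using (hasDerivAt_id x).div_const (Real.sqrt 2)
  have hsinh : HasDerivAt (fun y : ℝ => Real.sinh (y / Real.sqrt 2))
      (Real.cosh (x / Real.sqrt 2) * (1 / Real.sqrt 2)) x :=
    (Real.hasDerivAt_sinh _).comp x h1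
  have hc : HasDerivAt (fun y : ℝ => Real.cosh (y / Real.sqrt 2))
      (Real.sinh (x / Real.sqrt 2) * (1 / Real.sqrt 2)) x :=
    (Real.hasDerivAt_cosh _).comp x h1
  have hc3 := hc.pow 3
  have hne : (Real.cosh (x / Real.sqrt 2)) ^ 3 ≠ 0 := pow_ne_zero _ (cosh_ne' _)
  have hF := (hsinh.div hc3 hne).const_mul (3 / Real.sqrt 2)
  refine hF.congr_deriv ?_
  have hcne := cosh_ne' (x / Real.sqrt 2)
  have hs0 : Real.sqrt 2 ≠ 0 := by positivity
  have hs2 : Real.sqrt 2 * Real.sqrt 2 = 2 := Real.mul_self_sqrt (by norm_num)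
  simp only [Pi.pow_apply]
  field_simp
  linear_combination (9 * Real.cosh (x / Real.sqrt 2) ^ 2 * Real.sinh (x / Real.sqrt 2) ^ 2
      - 3 * Real.cosh (x / Real.sqrt 2) ^ 4) * hs2

lemma deriv_phi4Res : deriv phi4Res = phi4Res' :=
  funext fun x => (hasDerivAt_phi4Res x).deriv

/-- R(x) = 1 − (3/2) sech²(x/√2) is a resonance of
𝓛_H = −∂ₓ² + 2 − 3 sech²(x/√2) at λ = 2, the bottom of the continuous spectrum. -/
theorem phi4_even_resonance :
    ∀ x : ℝ,
      -(deriv (deriv phi4Res) x)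
        + (2 - 3 * (1 / Real.cosh (x / Real.sqrt 2)) ^ 2) * phi4Res x
        = 2 * phi4Res x := by
  intro x
  rw [deriv_phi4Res, (hasDerivAt_phi4Res' x).deriv]
  have hcne := cosh_ne' (x / Real.sqrt 2)
  have hid : Real.sinh (x / Real.sqrt 2) ^ 2 = Real.cosh (x / Real.sqrt 2) ^ 2 - 1 := by
    have := Real.cosh_sq_sub_sinh_sq (x / Real.sqrt 2); linarith
  rw [phi4Res]
  field_simp
  linear_combination 9 * hid
end
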